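/- For G = SU_n and Z = ℤ_k ⊆ ℤ_n = Z(G) (k dividing n), the fundamental level of G/Z equals 1 if n is odd or n/k is even, and equals 2 otherwise; the basic level of G/Z is the smallest positive integer ℓ with (n(n−1)/k²)·ℓ ∈ ℤ. -/

import Mathlib

open scoped RealInnerProductSpace

/-- A level ℓ compatible commutator map on the lattice Λ (relative to the pairing B and
the coroot lattice Q): a bi-multiplicative, skew-symmetric map into the unit circle
satisfying `ω(α,μ) = (-1)^(ℓ⟨α,μ⟩)` whenever α lies in Q. -/
def IsCommutatorForm {V : Type*} [AddCommGroup V] (B : V → V → ℝ) (Q Λ : Set V)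
    (ℓ : ℕ) (ω : V → V → ℂ) : Prop :=
  (∀ a ∈ Λ, ∀ b ∈ Λ, ‖ω a b‖ = 1) ∧
  (∀ a ∈ Λ, ∀ b ∈ Λ, ∀ c ∈ Λ, ω (a + b) c = ω a c * ω b c) ∧
  (∀ a ∈ Λ, ∀ b ∈ Λ, ∀ c ∈ Λ, ω a (b + c) = ω a b * ω a c) ∧
  (∀ a ∈ Λ, ∀ b ∈ Λ, ω a b * ω b a = 1) ∧
  (∀ a ∈ Λ, ω a a = 1) ∧
  (∀ α ∈ Q, α ∈ Λ → ∀ μ ∈ Λ, ∀ z : ℤ, B α μ = (z : ℝ) →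
    ω α μ = (-1 : ℂ) ^ ((ℓ : ℤ) * z))

/-- The coroot (= root) lattice of SU_n: the ℤ-span of the vectors `θ_i - θ_j`. -/
def sunQ (n : ℕ) : Submodule ℤ (EuclideanSpace ℝ (Fin n)) :=
  Submodule.span ℤ {v | ∃ i j : Fin n, i ≠ j ∧
    v = EuclideanSpace.single i (1 : ℝ) - EuclideanSpace.single j (1 : ℝ)}

/-- The fundamental coweight `ω₁ = θ₁ - (1/n) Σ θ_i` of SU_n, generating the center. -/
noncomputable def sunOmega1 (n : ℕ) (hn : 0 < n) : EuclideanSpace ℝ (Fin n) :=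
  EuclideanSpace.single (⟨0, hn⟩ : Fin n) (1 : ℝ) -
    (1 / (n : ℝ)) • ∑ i : Fin n, EuclideanSpace.single i (1 : ℝ)

/-- The integral lattice `Λ_Z` of `SU_n/ℤ_k`: generated by the root lattice together
with `(n/k)·ω₁`. -/
def sunLambda (n k : ℕ) (hn : 0 < n) : Submodule ℤ (EuclideanSpace ℝ (Fin n)) :=
  sunQ n ⊔ Submodule.span ℤ {(((n / k : ℕ) : ℝ)) • sunOmega1 n hn}

/-! ### Auxiliary material -/

noncomputable def sun13E (r : ℝ) : ℂ := Complex.exp (↑(Real.pi * r) * Complex.I)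

lemma sun13E_abs (r : ℝ) : ‖sun13E r‖ = 1 := Complex.norm_exp_ofReal_mul_I _

lemma sun13E_add (r s : ℝ) : sun13E (r + s) = sun13E r * sun13E s := by
  rw [sun13E, sun13E, sun13E, ← Complex.exp_add]; congr 1; push_cast; ring

lemma sun13E_two (z : ℤ) : sun13E (2*z) = 1 := by
  rw [sun13E]
  convert Complex.exp_int_mul_two_pi_mul_I z using 2
  push_cast; ring

lemma sun13E_int (z : ℤ) : sun13E z = (-1)^z := by
  rw [sun13E, show (↑(Real.pi*(z:ℝ)):ℂ) * Complex.I = z * (↑Real.pi*Complex.I) by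
    push_cast; ring, Complex.exp_int_mul, Complex.exp_pi_mul_I]

lemma sun13E_shift (r : ℝ) (z : ℤ) : sun13E (r + 2*z) = sun13E r := by
  rw [sun13E_add, sun13E_two, mul_one]

noncomputable def sun13V (n k : ℕ) (hn : 0 < n) : EuclideanSpace ℝ (Fin n) :=
  ((n / k : ℕ) : ℝ) • sunOmega1 n hn

lemma zsmul_apply' {n : ℕ} (a : ℤ) (x : EuclideanSpace ℝ (Fin n)) (i : Fin n) :
    (a • x) i = (a : ℝ) * x i := by
  simp [PiLp.smul_apply, zsmul_eq_mul]

lemma sunOmega1_apply {n : ℕ} (hn : 0 < n) (p : Fin n) :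
    sunOmega1 n hn p = (if p = ⟨0,hn⟩ then 1 else 0) - 1/n := by
  have hsum : (∑ i : Fin n, EuclideanSpace.single i (1 : ℝ)) p = 1 := by
    rw [WithLp.ofLp_sum, Finset.sum_apply]; simp [EuclideanSpace.single_apply]
  rw [sunOmega1, PiLp.sub_apply, PiLp.smul_apply, hsum, EuclideanSpace.single_apply]
  simp

lemma sun13V_apply {n k : ℕ} (hn : 0 < n) (p : Fin n) :
    sun13V n k hn p = ((n/k : ℕ) : ℝ) * ((if p = ⟨0,hn⟩ then 1 else 0) - 1/n) := by
  rw [sun13V, PiLp.smul_apply, sunOmega1_apply, smul_eq_mul]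

lemma inner_eq_sum' {n : ℕ} (a b : EuclideanSpace ℝ (Fin n)) : ⟪a,b⟫ = ∑ i, a i * b i := by
  simp [PiLp.inner_apply, RCLike.inner_apply, mul_comm]

lemma sunQ_coords {n : ℕ} {q : EuclideanSpace ℝ (Fin n)} (hq : q ∈ sunQ n) :
    (∀ i, ∃ z : ℤ, q i = z) ∧ ∑ i, q i = 0 := by
  induction hq using Submodule.span_induction with
  | mem x h =>
    obtain ⟨i, j, hij, rfl⟩ := h
    have hc : ∀ p, (EuclideanSpace.single i (1:ℝ) - EuclideanSpace.single j 1
        : EuclideanSpace ℝ (Fin n)) p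
        = (if p = i then 1 else 0) - (if p = j then 1 else 0) := by
      intro p; simp [PiLp.sub_apply, EuclideanSpace.single_apply]
    constructor
    · intro p
      refine ⟨(if p = i then 1 else 0) - (if p = j then 1 else 0), ?_⟩
      rw [hc]; split_ifs <;> norm_num
    · simp only [hc]
      rw [Finset.sum_sub_distrib]
      simp
  | zero => exact ⟨fun i => ⟨0, by simp⟩, by simp⟩
  | add x y hx hy ihx ihy =>
    obtain ⟨hx1, hx2⟩ := ihx; obtain ⟨hy1, hy2⟩ := ihy
    refine ⟨fun i => ?_, ?_⟩
    · obtain ⟨a, ha⟩ := hx1 i; obtain ⟨b, hb⟩ := hy1 i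
      exact ⟨a + b, by simp [PiLp.add_apply, ha, hb]⟩
    · simp [PiLp.add_apply, Finset.sum_add_distrib, hx2, hy2]
  | smul a x hx ih =>
    obtain ⟨h1, h2⟩ := ih
    refine ⟨fun i => ?_, ?_⟩
    · obtain ⟨z, hz⟩ := h1 i
      refine ⟨a * z, ?_⟩
      rw [zsmul_apply', hz]; push_cast; ring
    · simp only [zsmul_apply', ← Finset.mul_sum, h2, mul_zero]

lemma inner_int_coords {n : ℕ} {a b : EuclideanSpace ℝ (Fin n)}
    (ha : ∀ i, ∃ z : ℤ, a i = z) (hb : ∀ i, ∃ z : ℤ, b i = z) :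
    ∃ z : ℤ, ⟪a,b⟫ = z := by
  choose za hza using ha
  choose zb hzb using hb
  refine ⟨∑ i, za i * zb i, ?_⟩
  rw [inner_eq_sum']
  push_cast
  exact Finset.sum_congr rfl fun i _ => by rw [hza, hzb]

lemma sunQ_inner_int {n : ℕ} {q q' : EuclideanSpace ℝ (Fin n)}
    (hq : q ∈ sunQ n) (hq' : q' ∈ sunQ n) : ∃ z : ℤ, ⟪q,q'⟫ = z :=
  inner_int_coords (sunQ_coords hq).1 (sunQ_coords hq').1

lemma sunQ_inner_self_even {n : ℕ} {q : EuclideanSpace ℝ (Fin n)} (hq : q ∈ sunQ n) :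
    ∃ z : ℤ, ⟪q,q⟫ = 2*z := by
  obtain ⟨h1, h2⟩ := sunQ_coords hq
  choose za hza using h1
  have hsum : ∑ i, za i = 0 := by
    have : ((∑ i, za i : ℤ) : ℝ) = 0 := by
      push_cast
      rw [← h2]
      exact Finset.sum_congr rfl fun i _ => (hza i).symm
    exact_mod_cast this
  have heven : Even (∑ i, za i * za i) := by
    have : ((∑ i, za i * za i : ℤ) : ZMod 2) = 0 := by
      push_cast
      have hx : ∀ x : ZMod 2, x * x = x := by decide
      rw [Finset.sum_congr rfl fun i _ => hx ((za i : ZMod 2))]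
      rw [show (∑ i, (za i : ZMod 2)) = ((∑ i, za i : ℤ) : ZMod 2) by push_cast; ring, hsum]
      simp
    have h2d := (ZMod.intCast_zmod_eq_zero_iff_dvd _ 2).mp this
    obtain ⟨c, hc⟩ := h2d
    exact ⟨c, by omega⟩
  obtain ⟨t, ht⟩ := heven
  refine ⟨t, ?_⟩
  rw [inner_eq_sum']
  have : (∑ i, q i * q i) = ((∑ i, za i * za i : ℤ) : ℝ) := by
    push_cast
    exact Finset.sum_congr rfl fun i _ => by rw [hza]
  rw [this, ht]; push_cast; ring

lemma sun13V_inner_self {n k : ℕ} (hn : 0 < n) :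
    ⟪sun13V n k hn, sun13V n k hn⟫ = ((n/k : ℕ):ℝ)^2 * ((n:ℝ)-1)/n := by
  have hn' : (n:ℝ) ≠ 0 := Nat.cast_ne_zero.mpr hn.ne'
  set m : ℝ := ((n/k : ℕ):ℝ)
  set i0 : Fin n := ⟨0, hn⟩
  rw [inner_eq_sum']
  have h : ∀ i : Fin n, sun13V n k hn i * sun13V n k hn i
      = m^2/(n:ℝ)^2 + (if i = i0 then m^2*(1 - 2/n) else 0) := by
    intro i
    rw [sun13V_apply]
    split_ifs <;> field_simp <;> ring
  rw [Finset.sum_congr rfl fun i _ => h i, Finset.sum_add_distrib, Finset.sum_const,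
    Finset.sum_ite_eq' Finset.univ i0 (fun _ => m^2*(1-2/(n:ℝ)))]
  simp only [Finset.mem_univ, if_true, Finset.card_univ, Fintype.card_fin, nsmul_eq_mul]
  field_simp
  ring

lemma sunQ_inner_V {n k : ℕ} (hn : 0 < n) {q : EuclideanSpace ℝ (Fin n)} (hq : q ∈ sunQ n) :
    ∃ z : ℤ, ⟪q, sun13V n k hn⟫ = z := by
  obtain ⟨h1, h2⟩ := sunQ_coords hq
  choose za hza using h1
  refine ⟨(n/k : ℕ) * za ⟨0,hn⟩, ?_⟩
  rw [inner_eq_sum']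
  have h : ∀ i, q i * sun13V n k hn i
      = ((n/k:ℕ):ℝ) * (if i = (⟨0,hn⟩:Fin n) then q i else 0) - (((n/k:ℕ):ℝ)/n) * q i := by
    intro i; rw [sun13V_apply]; split_ifs <;> ring
  rw [Finset.sum_congr rfl fun i _ => h i, Finset.sum_sub_distrib, ← Finset.mul_sum,
    ← Finset.mul_sum, Finset.sum_ite_eq' Finset.univ _ (fun i => q i), h2]
  rw [if_pos (Finset.mem_univ _), hza, mul_zero, sub_zero, Int.cast_mul, Int.cast_natCast]

lemma sun13V_order {n k : ℕ} (h0 : 0 < n) (hn : 2 ≤ n) (hk : 0 < k) (hkn : k ∣ n) {s : ℤ}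
    (h : s • sun13V n k h0 ∈ sunQ n) : (k:ℤ) ∣ s := by
  set m := n / k with hmdef
  have hm : k * m = n := Nat.mul_div_cancel' hkn
  have hm0 : 0 < m := Nat.div_pos (Nat.le_of_dvd (by omega) hkn) hk
  obtain ⟨h1, _⟩ := sunQ_coords h
  obtain ⟨z, hz⟩ := h1 ⟨1, by omega⟩
  rw [zsmul_apply', sun13V_apply] at hz
  rw [if_neg (by simp)] at hz
  have hne : (n:ℝ) ≠ 0 := Nat.cast_ne_zero.mpr (by omega)
  field_simp at hz
  have h3 : (-s : ℤ) = z * k := by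
    have h2 : ((-s : ℤ):ℝ) * n = ((z*k : ℤ):ℝ) * n := by push_cast; have hq : ((n/k:ℕ):ℝ) * k = n := (by exact_mod_cast Nat.div_mul_cancel hkn); linear_combination (k:ℝ)*hz + (s:ℝ)*hq
    exact_mod_cast mul_right_cancel₀ hne h2
  exact ⟨-z, by linear_combination -h3⟩

lemma sun13V_k_smul {n k : ℕ} (h0 : 0 < n) (hkn : k ∣ n) :
    (k:ℤ) • sun13V n k h0 ∈ sunQ n := by
  set i0 : Fin n := ⟨0, h0⟩ with hi0
  have hm : (k:ℝ) * ((n/k : ℕ):ℝ) = n := by exact_mod_cast Nat.mul_div_cancel' hkn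
  have hne : (n:ℝ) ≠ 0 := Nat.cast_ne_zero.mpr h0.ne'
  have hid : (k:ℤ) • sun13V n k h0 = ∑ i ∈ Finset.univ.erase i0,
      (EuclideanSpace.single i0 (1:ℝ) - EuclideanSpace.single i 1) := by
    ext p
    rw [zsmul_apply', sun13V_apply, WithLp.ofLp_sum, Finset.sum_apply]
    have hterm : ∀ i, (EuclideanSpace.single i0 (1:ℝ) - EuclideanSpace.single i 1
        : EuclideanSpace ℝ (Fin n)) p = (if p = i0 then 1 else 0) - (if p = i then 1 else 0) := by
      intro i; simp [PiLp.sub_apply, EuclideanSpace.single_apply]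
    rw [Finset.sum_congr rfl fun i _ => hterm i, Finset.sum_sub_distrib, Finset.sum_const,
      Finset.sum_ite_eq _ p (fun _ => (1:ℝ))]
    rw [Finset.card_erase_of_mem (Finset.mem_univ i0), Finset.card_univ, Fintype.card_fin]
    by_cases hp : p = i0
    · rw [if_pos hp, if_neg (by simp [hp])]
      rw [nsmul_eq_mul, mul_one, sub_zero, Nat.cast_sub h0, Nat.cast_one, Int.cast_natCast]
      have h2 : ((k:ℝ) * (↑(n/k:ℕ) * ((1:ℝ) - 1/↑n)) : ℝ)
          = ↑k*↑(n/k:ℕ) - (↑k*↑(n/k:ℕ))/↑n := by ring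
      rw [h2, hm, div_self hne]
    · rw [if_neg hp, if_pos (Finset.mem_erase.mpr ⟨hp, Finset.mem_univ p⟩), smul_zero,
        Int.cast_natCast]
      have h2 : ((k:ℝ) * (↑(n/k:ℕ) * ((0:ℝ) - 1/↑n)) : ℝ) = -((↑k*↑(n/k:ℕ))/↑n) := by ring
      rw [h2, hm, div_self hne]
      norm_num
  rw [hid]
  exact Submodule.sum_mem _ fun i hi =>
    Submodule.subset_span ⟨i0, i, (Finset.ne_of_mem_erase hi).symm, rfl⟩

set_option maxHeartbeats 1600000 in
/-- For `G = SU_n` and `Z = ℤ_k ⊆ ℤ_n = Z(G)` (k ∣ n), the fundamental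
level of `G/Z` equals 1 if n is odd or n/k is even, and equals 2 otherwise; the basic
level of `G/Z` is the smallest positive integer ℓ with `(n(n-1)/k²)·ℓ ∈ ℤ`. -/
theorem sun_fundamental_and_basic_level
    (n k : ℕ) (hn : 2 ≤ n) (hk : 0 < k) (hkn : k ∣ n) :
    IsLeast {ℓ : ℕ | 1 ≤ ℓ ∧ ∃ ω : EuclideanSpace ℝ (Fin n) → _ → ℂ,
        IsCommutatorForm (fun a b => ⟪a, b⟫) (sunQ n : Set _)
          (sunLambda n k (by omega) : Set _) ℓ ω}
      (if Odd n ∨ Even (n / k) then 1 else 2) ∧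
    ∀ ℓ : ℕ, 1 ≤ ℓ →
      ((∀ a ∈ sunLambda n k (by omega), ∀ b ∈ sunLambda n k (by omega),
          ∃ z : ℤ, (ℓ : ℝ) * ⟪a, b⟫ = (z : ℝ)) ↔
        ∃ z : ℤ, (ℓ : ℝ) * ((n : ℝ) * ((n : ℝ) - 1) / (k : ℝ) ^ 2) = (z : ℝ)) := by
  have h0 : 0 < n := by omega
  set m : ℕ := n / k with hmdef
  have hm : k * m = n := Nat.mul_div_cancel' hkn
  have hm0 : 0 < m := Nat.div_pos (Nat.le_of_dvd (by omega) hkn) hk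
  set V : EuclideanSpace ℝ (Fin n) := sun13V n k h0 with hVdef
  have hkr : (k:ℝ) ≠ 0 := Nat.cast_ne_zero.mpr hk.ne'
  have hnr : (n:ℝ) ≠ 0 := Nat.cast_ne_zero.mpr h0.ne'
  have hmr : (k:ℝ) * (m:ℝ) = n := by exact_mod_cast hm
  have hVV : ⟪V,V⟫ = ((m:ℕ):ℝ)^2 * ((n:ℝ)-1)/n := sun13V_inner_self h0
  have hmr2 : ((m:ℕ):ℝ) = (n:ℝ)/(k:ℝ) := by
    field_simp
    linear_combination hmr
  have hVV2 : ⟪V,V⟫ = (n:ℝ)*((n:ℝ)-1)/(k:ℝ)^2 := by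
    rw [hVV, hmr2]
    field_simp
  have hVVk : ⟪V,V⟫ * k = (m:ℝ) * ((n:ℝ)-1) := by
    rw [hVV2, hmr2]
    field_simp
  -- the lattice and decompositions
  have hLam : ∀ (p : 0 < n), sunLambda n k p = sunQ n ⊔ Submodule.span ℤ {V} := fun _ => rfl
  have hVmem : ∀ (p : 0 < n), V ∈ sunLambda n k p := by
    intro p; rw [hLam]
    exact Submodule.mem_sup_right (Submodule.subset_span rfl)
  have hQle : ∀ (p : 0 < n), sunQ n ≤ sunLambda n k p := fun p => le_sup_left
  have hdec0 : ∀ x, x ∈ sunLambda n k h0 → ∃ s : ℤ, x - s • V ∈ sunQ n := by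
    intro x hx
    rw [hLam] at hx
    obtain ⟨q, hq, y, hy, rfl⟩ := Submodule.mem_sup.mp hx
    obtain ⟨s, rfl⟩ := Submodule.mem_span_singleton.mp hy
    exact ⟨s, by simpa using hq⟩
  choose! Sf hSf using hdec0
  have horder : ∀ s : ℤ, s • V ∈ sunQ n → (k:ℤ) ∣ s := fun s h =>
    sun13V_order h0 hn hk hkn h
  have hSadd : ∀ x ∈ sunLambda n k h0, ∀ y ∈ sunLambda n k h0,
      ∃ d : ℤ, Sf (x+y) = Sf x + Sf y + k*d := by
    intro x hx y hy
    have hmemxy : x + y ∈ sunLambda n k h0 := add_mem hx hy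
    have hvec : (Sf x + Sf y - Sf (x+y)) • V
        = ((x+y) - Sf (x+y) • V) - ((x - Sf x • V) + (y - Sf y • V)) := by
      rw [sub_smul, add_smul]
      abel
    have : (Sf x + Sf y - Sf (x+y)) • V ∈ sunQ n := by
      rw [hvec]
      exact sub_mem (hSf _ hmemxy) (add_mem (hSf x hx) (hSf y hy))
    obtain ⟨d, hd⟩ := horder _ this
    exact ⟨-d, by linear_combination -hd⟩
  have hSQ : ∀ x ∈ sunLambda n k h0, x ∈ sunQ n → ∃ e : ℤ, Sf x = k * e := by
    intro x hx hxQ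
    have : (-(Sf x)) • V ∈ sunQ n := by
      have hvec : (-(Sf x)) • V = (x - Sf x • V) - x := by rw [neg_smul]; abel
      rw [hvec]
      exact sub_mem (hSf x hx) hxQ
    obtain ⟨e, he⟩ := horder _ this
    exact ⟨-e, by linear_combination -he⟩
  -- inner product decompositions
  have hxdec : ∀ x, x ∈ sunLambda n k h0 → x = (x - Sf x • V) + Sf x • V := by
    intro x _; abel
  have hinner : ∀ x ∈ sunLambda n k h0, ∀ y ∈ sunLambda n k h0,
      ∃ z : ℤ, ⟪x,y⟫ = z + (Sf x * Sf y) * ⟪V,V⟫ := by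
    intro x hx y hy
    have hqx := hSf x hx
    have hqy := hSf y hy
    obtain ⟨z1, hz1⟩ := sunQ_inner_int hqx hqy
    obtain ⟨z2, hz2⟩ : ∃ z : ℤ, ⟪x - Sf x • V, V⟫ = z := sunQ_inner_V h0 hqx
    obtain ⟨z3, hz3⟩ : ∃ z : ℤ, ⟪y - Sf y • V, V⟫ = z := sunQ_inner_V h0 hqy
    refine ⟨z1 + Sf y * z2 + Sf x * z3, ?_⟩
    have hx' : x = (x - Sf x • V) + ((Sf x : ℤ) : ℝ) • V := by
      rw [Int.cast_smul_eq_zsmul]; abel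
    have hy' : y = (y - Sf y • V) + ((Sf y : ℤ) : ℝ) • V := by
      rw [Int.cast_smul_eq_zsmul]; abel
    have expand : ⟪x,y⟫ = ⟪x - Sf x • V, y - Sf y • V⟫
        + ((Sf y : ℤ) : ℝ) * ⟪x - Sf x • V, V⟫
        + ((Sf x : ℤ) : ℝ) * ⟪V, y - Sf y • V⟫
        + ((Sf x : ℤ) : ℝ) * ((Sf y : ℤ) : ℝ) * ⟪V,V⟫ := by
      conv_lhs => rw [hx', hy']
      rw [inner_add_left, inner_add_right, inner_add_right, real_inner_smul_left,
        real_inner_smul_left, real_inner_smul_right, real_inner_smul_right]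
      ring
    rw [expand, hz1, hz2, real_inner_comm (y - Sf y • V) V, hz3]
    push_cast
    ring
  have hdiagd : ∀ x ∈ sunLambda n k h0,
      ∃ z : ℤ, ⟪x,x⟫ = 2*z + ((Sf x * Sf x : ℤ) : ℝ) * ⟪V,V⟫ := by
    intro x hx
    have hqx := hSf x hx
    obtain ⟨z1, hz1⟩ := sunQ_inner_self_even hqx
    obtain ⟨z2, hz2⟩ : ∃ z : ℤ, ⟪x - Sf x • V, V⟫ = z := sunQ_inner_V h0 hqx
    refine ⟨z1 + Sf x * z2, ?_⟩
    have hx' : x = (x - Sf x • V) + ((Sf x : ℤ) : ℝ) • V := by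
      rw [Int.cast_smul_eq_zsmul]; abel
    have expand : ⟪x,x⟫ = ⟪x - Sf x • V, x - Sf x • V⟫
        + ((Sf x : ℤ) : ℝ) * ⟪x - Sf x • V, V⟫
        + ((Sf x : ℤ) : ℝ) * ⟪V, x - Sf x • V⟫
        + ((Sf x : ℤ) : ℝ) * ((Sf x : ℤ) : ℝ) * ⟪V,V⟫ := by
      conv_lhs => rw [hx']
      rw [inner_add_left, inner_add_right, inner_add_right, real_inner_smul_left,
        real_inner_smul_left, real_inner_smul_right, real_inner_smul_right]
      ring
    rw [expand, hz1, hz2, real_inner_comm (x - Sf x • V) V, hz2]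
    push_cast
    ring
  -- the construction of a commutator form of level L
  have hconstr : ∀ L : ℕ, (∃ t : ℤ, (L:ℤ) * (m * ((n:ℤ)-1)) = 2*t) →
      ∃ ω : EuclideanSpace ℝ (Fin n) → EuclideanSpace ℝ (Fin n) → ℂ,
        IsCommutatorForm (fun a b => ⟪a, b⟫) (sunQ n : Set _)
          (sunLambda n k h0 : Set _) L ω := by
    rintro L ⟨t, ht⟩
    have hckr : (L:ℝ) * (⟪V,V⟫ * (k:ℝ)) = 2*(t:ℝ) := by
      rw [hVVk]
      exact_mod_cast ht
    refine ⟨fun x y => sun13E ((L:ℝ)*⟪x,y⟫ - (L:ℝ)*⟪V,V⟫*((Sf x * Sf y : ℤ) : ℝ)),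
      ?_, ?_, ?_, ?_, ?_, ?_⟩
    · intro a _ b _
      exact sun13E_abs _
    · intro a ha b hb c hc
      obtain ⟨d, hd⟩ := hSadd a ha b hb
      have hdr : ((Sf (a+b) : ℤ):ℝ) = (Sf a : ℝ) + (Sf b : ℝ) + (k:ℝ)*(d:ℝ) := by
        exact_mod_cast hd
      beta_reduce
      rw [show (L:ℝ)*⟪a+b,c⟫ - (L:ℝ)*⟪V,V⟫*((Sf (a+b) * Sf c : ℤ) : ℝ)
          = (((L:ℝ)*⟪a,c⟫ - (L:ℝ)*⟪V,V⟫*((Sf a * Sf c : ℤ) : ℝ))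
            + ((L:ℝ)*⟪b,c⟫ - (L:ℝ)*⟪V,V⟫*((Sf b * Sf c : ℤ) : ℝ)))
            + 2*((-(t*(d*Sf c)) : ℤ) : ℝ) from by
        rw [inner_add_left]
        push_cast [hdr]
        linear_combination (-(d:ℝ)*(Sf c : ℝ))*hckr,
        sun13E_shift, sun13E_add]
    · intro a ha b hb c hc
      obtain ⟨d, hd⟩ := hSadd b hb c hc
      have hdr : ((Sf (b+c) : ℤ):ℝ) = (Sf b : ℝ) + (Sf c : ℝ) + (k:ℝ)*(d:ℝ) := by
        exact_mod_cast hd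
      beta_reduce
      rw [show (L:ℝ)*⟪a,b+c⟫ - (L:ℝ)*⟪V,V⟫*((Sf a * Sf (b+c) : ℤ) : ℝ)
          = (((L:ℝ)*⟪a,b⟫ - (L:ℝ)*⟪V,V⟫*((Sf a * Sf b : ℤ) : ℝ))
            + ((L:ℝ)*⟪a,c⟫ - (L:ℝ)*⟪V,V⟫*((Sf a * Sf c : ℤ) : ℝ)))
            + 2*((-(t*(d*Sf a)) : ℤ) : ℝ) from by
        rw [inner_add_right]
        push_cast [hdr]
        linear_combination (-(d:ℝ)*(Sf a : ℝ))*hckr,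
        sun13E_shift, sun13E_add]
    · intro a ha b hb
      obtain ⟨z, hz⟩ := hinner a ha b hb
      beta_reduce
      rw [← sun13E_add, show ((L:ℝ)*⟪a,b⟫ - (L:ℝ)*⟪V,V⟫*((Sf a * Sf b : ℤ) : ℝ))
          + ((L:ℝ)*⟪b,a⟫ - (L:ℝ)*⟪V,V⟫*((Sf b * Sf a : ℤ) : ℝ))
          = 2*(((L:ℤ)*z : ℤ):ℝ) from by
        rw [real_inner_comm a b, hz]
        push_cast
        ring,
        sun13E_two]
    · intro a ha
      obtain ⟨z, hz⟩ := hdiagd a ha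
      beta_reduce
      rw [show (L:ℝ)*⟪a,a⟫ - (L:ℝ)*⟪V,V⟫*((Sf a * Sf a : ℤ) : ℝ)
          = 2*(((L:ℤ)*z : ℤ):ℝ) from by
        rw [hz]
        push_cast
        ring,
        sun13E_two]
    · intro α hαQ hαΛ μ hμ z hz
      obtain ⟨e, he⟩ := hSQ α hαΛ hαQ
      have her : ((Sf α : ℤ):ℝ) = (k:ℝ)*(e:ℝ) := by exact_mod_cast he
      have hz' : ⟪α, μ⟫ = (z:ℝ) := hz
      beta_reduce
      rw [show (L:ℝ)*⟪α,μ⟫ - (L:ℝ)*⟪V,V⟫*((Sf α * Sf μ : ℤ) : ℝ)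
          = (((L:ℤ)*z : ℤ):ℝ) + 2*((-(t*(e*Sf μ)) : ℤ):ℝ) from by
        rw [hz']
        push_cast [her]
        linear_combination (-(e:ℝ)*(Sf μ : ℝ))*hckr,
        sun13E_shift, sun13E_int]
  constructor
  · constructor
    · -- membership
      split_ifs with hcase
      · refine ⟨le_refl 1, ?_⟩
        apply hconstr 1
        rcases hcase with hodd | heven
        · obtain ⟨u, hu⟩ := hodd
          have hu' : (n:ℤ) = 2*u+1 := by exact_mod_cast hu
          exact ⟨(m:ℤ)*u, by rw [hu']; ring⟩
        · obtain ⟨u, hu⟩ := heven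
          have hu' : (m:ℤ) = 2*u := by exact_mod_cast (by omega : m = 2*u)
          exact ⟨u*((n:ℤ)-1), by rw [hu']; ring⟩
      · refine ⟨by norm_num, ?_⟩
        apply hconstr 2
        exact ⟨(m:ℤ)*((n:ℤ)-1), by ring⟩
    · -- lower bound
      rintro ℓ ⟨hℓ1, ω, hω⟩
      split_ifs with hcase
      · exact hℓ1
      · push_neg at hcase
        obtain ⟨hne', hno⟩ := hcase
        rw [Nat.not_odd_iff_even] at hne'
        rw [Nat.not_even_iff_odd] at hno
        by_contra hlt
        push_neg at hlt
        interval_cases ℓ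
        obtain ⟨habs, haddl, haddr, hskew, hdiagω, hQω⟩ := hω
        have hVm : V ∈ sunLambda n k h0 := hVmem h0
        have hjmem : ∀ j : ℤ, j • V ∈ sunLambda n k h0 := fun j =>
          Submodule.smul_mem _ j hVm
        have hω0 : ω 0 V = 1 := by
          have h00 := haddl 0 (zero_mem _) 0 (zero_mem _) V hVm
          rw [add_zero] at h00
          have hne0 : ω 0 V ≠ 0 := by
            intro hq
            have := habs 0 (zero_mem _) V hVm
            rw [hq] at this
            simp at this
          exact mul_left_cancel₀ hne0 (h00.symm.trans (mul_one _).symm)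
        have h1 : ∀ j : ℕ, ω ((j:ℤ) • V) V = 1 := by
          intro j
          induction j with
          | zero => simpa using hω0
          | succ j ih =>
            have hstep := haddl ((j:ℤ)•V) (hjmem j) V hVm V hVm
            rw [ih, hdiagω V hVm, one_mul] at hstep
            rw [show ((j+1 : ℕ):ℤ) • V = (j:ℤ)•V + V from by push_cast; rw [add_smul, one_smul]]
            exact hstep
        have hkQ : ((k:ℤ)•V) ∈ sunQ n := sun13V_k_smul h0 hkn
        have hzV : ⟪(k:ℤ)•V, V⟫ = (((m:ℤ)*((n:ℤ)-1) : ℤ):ℝ) := by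
          rw [← Int.cast_smul_eq_zsmul ℝ, real_inner_smul_left]
          push_cast
          linear_combination hVVk
        have hcontr := hQω ((k:ℤ)•V) hkQ (hjmem k) V hVm ((m:ℤ)*((n:ℤ)-1)) hzV
        rw [h1 k] at hcontr
        have hoddexp : Odd ((1:ℤ) * ((m:ℤ)*((n:ℤ)-1))) := by
          rw [one_mul]
          refine Odd.mul ?_ ?_
          · exact_mod_cast hno
          · obtain ⟨a, ha⟩ := hne'
            exact ⟨(a:ℤ)-1, by push_cast [ha]; ring⟩
        rw [Nat.cast_one, hoddexp.neg_one_zpow] at hcontr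
        norm_num at hcontr
  · -- basic level
    intro ℓ hℓ
    constructor
    · intro h
      obtain ⟨z, hz⟩ := h V (hVmem h0) V (hVmem h0)
      exact ⟨z, by rw [← hVV2]; exact hz⟩
    · rintro ⟨z, hz⟩ a ha b hb
      obtain ⟨w, hw⟩ := hinner a ha b hb
      refine ⟨(ℓ:ℤ)*w + (Sf a * Sf b) * z, ?_⟩
      rw [hw, hVV2]
      push_cast
      linear_combination ((Sf a : ℝ)*(Sf b : ℝ))*hz
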